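/- Let γ > 1 and ε > 0 satisfy (γ-1)ε²e/(8γπ²) < 1, set c = ε/(2π), and let ρ_s, u_s, v_s, p_s: ℝ² → ℝ denote the stationary isentropic vortex fields: r² = (x-5)² + (y-5)², δT = -((γ-1)ε²/(8γπ²)) e^{1-r²}, ρ_s = (1+δT)^{1/(γ-1)}, p_s = (1+δT)^{γ/(γ-1)}, u_s = -c e^{(1-r²)/2}(y-5), v_s = c e^{(1-r²)/2}(x-5). Then the fields ρ(x,y,t) = ρ_s(x-t, y-t), u(x,y,t) = 1 + u_s(x-t, y-t), v(x,y,t) = 1 + v_s(x-t, y-t), p(x,y,t) = p_s(x-t, y-t) form an exact solution of the time-dependent two-dimensional compressible Euler equations: ∂_t ρ + ∂_x(ρu) + ∂_y(ρv) = 0, ∂_t(ρu) + ∂_x(ρu²+p) + ∂_y(ρuv) = 0, ∂_t(ρv) + ∂_x(ρuv) + ∂_y(ρv²+p) = 0, and ∂_t(ρE) + ∂_x(u(ρE+p)) + ∂_y(v(ρE+p)) = 0, where ρE = p/(γ-1) + ρ(u²+v²)/2. -/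

import Mathlib

private lemma hasDerivAt_congr_d {f : ℝ → ℝ} {a b z : ℝ} (h : HasDerivAt f a z)
    (hab : a = b) : HasDerivAt f b z := hab ▸ h

private lemma vortex_inner (K : ℝ) {s : ℝ → ℝ} {ds z : ℝ} (hs : HasDerivAt s ds z) :
    HasDerivAt (fun w => 1 + K * Real.exp (1 - s w)) (K * (Real.exp (1 - s z) * -ds)) z := by
  have h1 : HasDerivAt (fun w => (1 : ℝ) - s w) (-ds) z := by
    exact hs.const_sub 1
  exact (h1.exp.const_mul K).const_add 1

private lemma vortex_rpow (K q : ℝ) {s : ℝ → ℝ} {ds z : ℝ} (hs : HasDerivAt s ds z)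
    (hA : 1 + K * Real.exp (1 - s z) ≠ 0) :
    HasDerivAt (fun w => (1 + K * Real.exp (1 - s w)) ^ q)
      (K * (Real.exp (1 - s z) * -ds) * q * (1 + K * Real.exp (1 - s z)) ^ (q - 1)) z :=
  (vortex_inner K hs).rpow_const (Or.inl hA)

private lemma vortex_exp {s : ℝ → ℝ} {ds z : ℝ} (hs : HasDerivAt s ds z) :
    HasDerivAt (fun w => Real.exp ((1 - s w) / 2)) (Real.exp ((1 - s z) / 2) * (-ds / 2)) z := by
  have h1 : HasDerivAt (fun w => ((1 : ℝ) - s w) / 2) (-ds / 2) z := by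
    simpa using ((hasDerivAt_const z (1 : ℝ)).sub hs).div_const 2
  exact h1.exp

private lemma vortex_vel (c : ℝ) {s β : ℝ → ℝ} {ds dβ z : ℝ} (hs : HasDerivAt s ds z)
    (hβ : HasDerivAt β dβ z) :
    HasDerivAt (fun w => c * Real.exp ((1 - s w) / 2) * β w)
      (c * (Real.exp ((1 - s z) / 2) * (-ds / 2)) * β z
        + c * Real.exp ((1 - s z) / 2) * dβ) z :=
  ((vortex_exp hs).const_mul c).mul hβ

set_option maxHeartbeats 1000000

/-- The convected isentropic vortex with background velocity `(1,1)`: the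
time-shifted stationary vortex fields `Q_e(x,y,t) = Q(x-t, y-t, 0)` form an exact
solution of the time-dependent two-dimensional compressible Euler equations. -/
theorem convected_isentropic_vortex_solves_euler
    (γ ε : ℝ) (hγ : 1 < γ) (hε : 0 < ε)
    (hsmall : (γ - 1) * ε ^ 2 * Real.exp 1 / (8 * γ * Real.pi ^ 2) < 1)
    (c : ℝ) (hc : c = ε / (2 * Real.pi))
    (ρs us vs ps : ℝ → ℝ → ℝ)
    (hρs : ∀ x y, ρs x y =
      (1 + -((γ - 1) * ε ^ 2 / (8 * γ * Real.pi ^ 2)) *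
        Real.exp (1 - ((x - 5) ^ 2 + (y - 5) ^ 2))) ^ (1 / (γ - 1)))
    (hps : ∀ x y, ps x y =
      (1 + -((γ - 1) * ε ^ 2 / (8 * γ * Real.pi ^ 2)) *
        Real.exp (1 - ((x - 5) ^ 2 + (y - 5) ^ 2))) ^ (γ / (γ - 1)))
    (hus : ∀ x y, us x y =
      -(c * Real.exp ((1 - ((x - 5) ^ 2 + (y - 5) ^ 2)) / 2) * (y - 5)))
    (hvs : ∀ x y, vs x y =
      c * Real.exp ((1 - ((x - 5) ^ 2 + (y - 5) ^ 2)) / 2) * (x - 5))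
    (ρ u v p E : ℝ → ℝ → ℝ → ℝ)
    (hρ : ∀ x y t, ρ x y t = ρs (x - t) (y - t))
    (hu : ∀ x y t, u x y t = 1 + us (x - t) (y - t))
    (hv : ∀ x y t, v x y t = 1 + vs (x - t) (y - t))
    (hp : ∀ x y t, p x y t = ps (x - t) (y - t))
    (hE : ∀ x y t, E x y t =
      p x y t / (γ - 1) + ρ x y t * (u x y t ^ 2 + v x y t ^ 2) / 2) :
    ∀ x y t : ℝ,
      -- mass conservation
      (deriv (fun t' => ρ x y t') t
        + deriv (fun x' => ρ x' y t * u x' y t) x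
        + deriv (fun y' => ρ x y' t * v x y' t) y = 0) ∧
      -- x-momentum
      (deriv (fun t' => ρ x y t' * u x y t') t
        + deriv (fun x' => ρ x' y t * u x' y t ^ 2 + p x' y t) x
        + deriv (fun y' => ρ x y' t * u x y' t * v x y' t) y = 0) ∧
      -- y-momentum
      (deriv (fun t' => ρ x y t' * v x y t') t
        + deriv (fun x' => ρ x' y t * u x' y t * v x' y t) x
        + deriv (fun y' => ρ x y' t * v x y' t ^ 2 + p x y' t) y = 0) ∧
      -- energy
      (deriv (fun t' => E x y t') t
        + deriv (fun x' => u x' y t * (E x' y t + p x' y t)) x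
        + deriv (fun y' => v x y' t * (E x y' t + p x y' t)) y = 0) := by
  intro x y t
  simp only [hE, hρ, hu, hv, hp, hρs, hps, hus, hvs]
  set K := -((γ - 1) * ε ^ 2 / (8 * γ * Real.pi ^ 2)) with hK
  have hγpos : (0 : ℝ) < γ := by linarith
  have hγ0 : γ ≠ 0 := ne_of_gt hγpos
  have hγ1 : γ - 1 ≠ 0 := ne_of_gt (by linarith)
  have hπ : Real.pi ≠ 0 := Real.pi_ne_zero
  have hA0 : 0 < (1 + K * Real.exp (1 - ((x - t - 5) ^ 2 + (y - t - 5) ^ 2))) := by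
    rw [hK]
    have hD : 0 < (γ - 1) * ε ^ 2 / (8 * γ * Real.pi ^ 2) := by
      apply div_pos (mul_pos (by linarith) (pow_pos hε 2))
      have := Real.pi_pos
      nlinarith
    have hE0le : Real.exp (1 - ((x - t - 5) ^ 2 + (y - t - 5) ^ 2)) ≤ Real.exp 1 :=
      Real.exp_le_exp.mpr (by nlinarith [sq_nonneg (x - t - 5), sq_nonneg (y - t - 5)])
    have h2 := mul_le_mul_of_nonneg_left hE0le hD.le
    have h3 : (γ - 1) * ε ^ 2 / (8 * γ * Real.pi ^ 2) * Real.exp 1 < 1 := by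
      rw [div_mul_eq_mul_div]; exact hsmall
    nlinarith [h2, h3]
  have hAne : (1 + K * Real.exp (1 - ((x - t - 5) ^ 2 + (y - t - 5) ^ 2))) ≠ 0 := ne_of_gt hA0
  have hq1 : γ / (γ - 1) - 1 = 1 / (γ - 1) := by field_simp; ring
  have e1 : (1 + K * Real.exp (1 - ((x - t - 5) ^ 2 + (y - t - 5) ^ 2))) ^ (γ / (γ - 1) - 1)
      = (1 + K * Real.exp (1 - ((x - t - 5) ^ 2 + (y - t - 5) ^ 2))) ^ (1 / (γ - 1)) := by
    rw [hq1]
  have e2 : (1 + K * Real.exp (1 - ((x - t - 5) ^ 2 + (y - t - 5) ^ 2))) ^ (1 / (γ - 1) - 1)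
      = (1 + K * Real.exp (1 - ((x - t - 5) ^ 2 + (y - t - 5) ^ 2))) ^ (1 / (γ - 1))
        / (1 + K * Real.exp (1 - ((x - t - 5) ^ 2 + (y - t - 5) ^ 2))) :=
    Real.rpow_sub_one hAne _
  have e3 : (1 + K * Real.exp (1 - ((x - t - 5) ^ 2 + (y - t - 5) ^ 2))) ^ (γ / (γ - 1))
      = (1 + K * Real.exp (1 - ((x - t - 5) ^ 2 + (y - t - 5) ^ 2))) ^ (1 / (γ - 1))
        * (1 + K * Real.exp (1 - ((x - t - 5) ^ 2 + (y - t - 5) ^ 2))) := by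
    rw [show γ / (γ - 1) = 1 / (γ - 1) + 1 by field_simp; ring, Real.rpow_add_one hAne]
  have hE0F : Real.exp (1 - ((x - t - 5) ^ 2 + (y - t - 5) ^ 2))
      = Real.exp ((1 - ((x - t - 5) ^ 2 + (y - t - 5) ^ 2)) / 2)
        * Real.exp ((1 - ((x - t - 5) ^ 2 + (y - t - 5) ^ 2)) / 2) := by
    rw [← Real.exp_add]; congr 1; ring
  have hKc : K = -((γ - 1) * c ^ 2 / (2 * γ)) := by
    rw [hK, hc]; field_simp; ring
  clear_value K
  have hlx : HasDerivAt (fun w : ℝ => w - t - 5) 1 x :=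
    ((hasDerivAt_id x).sub_const t).sub_const 5
  have hly : HasDerivAt (fun w : ℝ => w - t - 5) 1 y :=
    ((hasDerivAt_id y).sub_const t).sub_const 5
  have hltx : HasDerivAt (fun w : ℝ => x - w - 5) (-1) t := by
    simpa using ((hasDerivAt_id t).const_sub x).sub_const 5
  have hlty : HasDerivAt (fun w : ℝ => y - w - 5) (-1) t := by
    simpa using ((hasDerivAt_id t).const_sub y).sub_const 5
  have hsx := (hlx.pow (n := 2)).add_const ((y - t - 5) ^ 2)
  have hsy := (hly.pow (n := 2)).const_add ((x - t - 5) ^ 2)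
  have hst := (hltx.pow (n := 2)).add (hlty.pow (n := 2))
  have hRx := vortex_rpow K (1 / (γ - 1)) hsx hAne
  have hRy := vortex_rpow K (1 / (γ - 1)) hsy hAne
  have hRt := vortex_rpow K (1 / (γ - 1)) hst hAne
  have hPx := vortex_rpow K (γ / (γ - 1)) hsx hAne
  have hPy := vortex_rpow K (γ / (γ - 1)) hsy hAne
  have hPt := vortex_rpow K (γ / (γ - 1)) hst hAne
  have hUx := ((vortex_vel c hsx (hasDerivAt_const x (y - t - 5))).neg).const_add 1
  have hUy := ((vortex_vel c hsy hly).neg).const_add 1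
  have hUt := ((vortex_vel c hst hlty).neg).const_add 1
  have hVx := (vortex_vel c hsx hlx).const_add 1
  have hVy := (vortex_vel c hsy (hasDerivAt_const y (x - t - 5))).const_add 1
  have hVt := (vortex_vel c hst hltx).const_add 1
  have hEx := (hPx.div_const (γ - 1)).add
    ((hRx.mul ((hUx.pow (n := 2)).add (hVx.pow (n := 2)))).div_const 2)
  have hEy := (hPy.div_const (γ - 1)).add
    ((hRy.mul ((hUy.pow (n := 2)).add (hVy.pow (n := 2)))).div_const 2)
  have hEt := (hPt.div_const (γ - 1)).add
    ((hRt.mul ((hUt.pow (n := 2)).add (hVt.pow (n := 2)))).div_const 2)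
  clear hE hρ hu hv hp hρs hps hus hvs hsmall hc hK
  refine ⟨?_, ?_, ?_, ?_⟩
  · erw [hRt.deriv, (hRx.mul hUx).deriv, (hRy.mul hVy).deriv]
    simp only [Pi.mul_apply, Pi.add_apply, Pi.pow_apply, Pi.neg_apply]
    rw [e2, hKc, hE0F]
    set F := Real.exp ((1 - ((x - t - 5) ^ 2 + (y - t - 5) ^ 2)) / 2) with hF
    clear_value F
    set A := 1 + -((γ - 1) * c ^ 2 / (2 * γ)) * (F * F) with hA
    clear_value A
    set R := A ^ (1 / (γ - 1)) with hR
    clear_value R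
    field_simp
    ring
  · erw [(hRt.mul hUt).deriv, ((hRx.mul (hUx.pow (n := 2))).add hPx).deriv,
      ((hRy.mul hUy).mul hVy).deriv]
    simp only [Pi.mul_apply, Pi.add_apply, Pi.pow_apply, Pi.neg_apply]
    rw [e1, e2, hKc, hE0F]
    set F := Real.exp ((1 - ((x - t - 5) ^ 2 + (y - t - 5) ^ 2)) / 2) with hF
    clear_value F
    set A := 1 + -((γ - 1) * c ^ 2 / (2 * γ)) * (F * F) with hA
    clear_value A
    set R := A ^ (1 / (γ - 1)) with hR
    clear_value R
    field_simp
    ring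
  · erw [(hRt.mul hVt).deriv, ((hRx.mul hUx).mul hVx).deriv,
      ((hRy.mul (hVy.pow (n := 2))).add hPy).deriv]
    simp only [Pi.mul_apply, Pi.add_apply, Pi.pow_apply, Pi.neg_apply]
    rw [e1, e2, hKc, hE0F]
    set F := Real.exp ((1 - ((x - t - 5) ^ 2 + (y - t - 5) ^ 2)) / 2) with hF
    clear_value F
    set A := 1 + -((γ - 1) * c ^ 2 / (2 * γ)) * (F * F) with hA
    clear_value A
    set R := A ^ (1 / (γ - 1)) with hR
    clear_value R
    field_simp
    ring
  · erw [hEt.deriv, (hUx.mul (hEx.add hPx)).deriv, (hVy.mul (hEy.add hPy)).deriv]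
    simp only [Pi.mul_apply, Pi.add_apply, Pi.pow_apply, Pi.neg_apply]
    rw [e1, e2, e3, hKc, hE0F]
    set F := Real.exp ((1 - ((x - t - 5) ^ 2 + (y - t - 5) ^ 2)) / 2) with hF
    clear_value F
    set A := 1 + -((γ - 1) * c ^ 2 / (2 * γ)) * (F * F) with hA
    clear_value A
    set R := A ^ (1 / (γ - 1)) with hR
    clear_value R
    field_simp
    ring
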